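/- arXiv:1203.3304 — 2 statements merged into one kernel-verified Lean document; each statement's English description precedes it below -/
import Mathlib

section
/- Let n ≥ 1, and let γ, v : ℝ → ℝⁿ be continuously differentiable and 2π-periodic, with γ′(s) ≠ 0 for all s. Then the length function L(t) = ∫₀^{2π} ‖γ′(s) + t·v′(s)‖ ds is differentiable at t = 0 with L′(0) = ∫₀^{2π} ⟨γ′(s), v′(s)⟩ / ‖γ′(s)‖ ds. (This is the first variation of length of a closed curve under the variation γ + t·v, the m = 1 case of the first variation of area −∫_S m·H·v.) -/
open Real
open scoped RealInnerProductSpace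

lemma aux_hasDerivAt_norm {E : Type*} [NormedAddCommGroup E] [InnerProductSpace ℝ E]
    (a b : E) (ha : a ≠ 0) :
    HasDerivAt (fun t : ℝ => ‖a + t • b‖) (⟪a, b⟫ / ‖a‖) 0 := by
  have hg : HasDerivAt (fun t : ℝ => a + t • b) b 0 := by
    simpa using ((hasDerivAt_id (0:ℝ)).smul_const b).const_add a
  have hi : HasDerivAt (fun t : ℝ => ⟪a + t • b, a + t • b⟫)
      (⟪a + (0:ℝ) • b, b⟫ + ⟪b, a + (0:ℝ) • b⟫) 0 := hg.inner ℝ hg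
  simp only [zero_smul, add_zero] at hi
  have h0 : ⟪a + (0:ℝ) • b, a + (0:ℝ) • b⟫ ≠ 0 := by
    simp only [zero_smul, add_zero]
    rw [real_inner_self_eq_norm_sq]
    exact pow_ne_zero 2 (norm_ne_zero_iff.mpr ha)
  have := hi.sqrt h0
  simp only [zero_smul, add_zero] at this
  have hval : (⟪a, b⟫ + ⟪b, a⟫) / (2 * √(⟪a, a⟫)) = ⟪a, b⟫ / ‖a‖ := by
    rw [real_inner_comm b a, real_inner_self_eq_norm_sq, Real.sqrt_sq (norm_nonneg a)]
    have hna : ‖a‖ ≠ 0 := norm_ne_zero_iff.mpr ha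
    field_simp
    ring
  rw [hval] at this
  convert this using 2 with t
  rw [real_inner_self_eq_norm_sq, Real.sqrt_sq (norm_nonneg _)]

/-- First variation of length of a closed curve: for `γ, v : ℝ → ℝⁿ` C¹ and
`2π`-periodic with `γ′` nonvanishing, `L(t) = ∫₀^{2π} ‖γ′ + t·v′‖` is
differentiable at `0` with `L′(0) = ∫₀^{2π} ⟨γ′, v′⟩/‖γ′‖`. -/
theorem first_variation_of_length
    (n : ℕ) (hn : 1 ≤ n) (γ v : ℝ → EuclideanSpace ℝ (Fin n))
    (hγ : ContDiff ℝ 1 γ) (hv : ContDiff ℝ 1 v)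
    (hγp : Function.Periodic γ (2 * π)) (hvp : Function.Periodic v (2 * π))
    (hγ' : ∀ s, deriv γ s ≠ 0) :
    HasDerivAt (fun t : ℝ => ∫ s in (0:ℝ)..(2 * π), ‖deriv γ s + t • deriv v s‖)
      (∫ s in (0:ℝ)..(2 * π), ⟪deriv γ s, deriv v s⟫ / ‖deriv γ s‖) 0 := by
  have hγc : Continuous (deriv γ) := hγ.continuous_deriv le_rfl
  have hvc : Continuous (deriv v) := hv.continuous_deriv le_rfl
  have key := intervalIntegral.hasDerivAt_integral_of_dominated_loc_of_lip
    (F := fun (t : ℝ) (s : ℝ) => ‖deriv γ s + t • deriv v s‖)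
    (F' := fun s => ⟪deriv γ s, deriv v s⟫ / ‖deriv γ s‖)
    (x₀ := (0:ℝ)) (a := (0:ℝ)) (b := 2 * π) (bound := fun s => ‖deriv v s‖)
    (μ := MeasureTheory.volume) (s := Metric.ball (0:ℝ) 1) (Metric.ball_mem_nhds _ one_pos)
    ?_ ?_ ?_ ?_ ?_ ?_
  · exact key.2
  · filter_upwards with t
    exact ((hγc.add (hvc.const_smul t)).norm).aestronglyMeasurable
  · exact ((hγc.add (hvc.const_smul (0:ℝ))).norm).intervalIntegrable _ _
  · have hcont : Continuous fun s => ⟪deriv γ s, deriv v s⟫ / ‖deriv γ s‖ :=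
      (hγc.inner hvc).div hγc.norm fun s => norm_ne_zero_iff.mpr (hγ' s)
    exact hcont.aestronglyMeasurable
  · filter_upwards with s _
    apply LipschitzWith.lipschitzOnWith
    apply LipschitzWith.of_dist_le_mul
    intro t t'
    rw [Real.coe_nnabs, abs_of_nonneg (norm_nonneg _), Real.dist_eq]
    calc dist ‖deriv γ s + t • deriv v s‖ ‖deriv γ s + t' • deriv v s‖
        ≤ dist (deriv γ s + t • deriv v s) (deriv γ s + t' • deriv v s) :=
          dist_norm_norm_le _ _
      _ = ‖(t - t') • deriv v s‖ := by
          rw [dist_eq_norm]; congr 1; rw [sub_smul]; abel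
      _ = |t - t'| * ‖deriv v s‖ := by rw [norm_smul, Real.norm_eq_abs]
      _ = ‖deriv v s‖ * |t - t'| := mul_comm _ _
  · exact hvc.norm.intervalIntegrable _ _
  · filter_upwards with s _
    exact aux_hasDerivAt_norm (deriv γ s) (deriv v s) (hγ' s)
end

section
/- Let γ, v : ℝ → ℝ² be continuously differentiable and 2π-periodic, and write γ = (γ₁, γ₂), v = (v₁, v₂). Define the signed area A(t) = (1/2)·∫₀^{2π} ((γ₁ + t·v₁)·(γ₂′ + t·v₂′) − (γ₂ + t·v₂)·(γ₁′ + t·v₁′)) ds. Then A is differentiable at t = 0 with A′(0) = ∫₀^{2π} (v₁(s)·γ₂′(s) − v₂(s)·γ₁′(s)) ds. (This is the first variation of enclosed ω-volume for a closed plane curve, dV/dt = ∫_S (dω ⌟ T)(v) in the case m = 1, n = 2, dω the standard area form.) -/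
open Real

/-- First variation of the signed area enclosed by a closed plane curve:
for `γ = (γ₁, γ₂)`, `v = (v₁, v₂)` C¹ and `2π`-periodic,
`A(t) = (1/2)∫₀^{2π} ((γ₁+t·v₁)(γ₂′+t·v₂′) − (γ₂+t·v₂)(γ₁′+t·v₁′))` is
differentiable at `0` with `A′(0) = ∫₀^{2π} (v₁·γ₂′ − v₂·γ₁′)`. -/
theorem first_variation_of_signed_area
    (γ₁ γ₂ v₁ v₂ : ℝ → ℝ)
    (hγ₁ : ContDiff ℝ 1 γ₁) (hγ₂ : ContDiff ℝ 1 γ₂)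
    (hv₁ : ContDiff ℝ 1 v₁) (hv₂ : ContDiff ℝ 1 v₂)
    (hγ₁p : Function.Periodic γ₁ (2 * π)) (hγ₂p : Function.Periodic γ₂ (2 * π))
    (hv₁p : Function.Periodic v₁ (2 * π)) (hv₂p : Function.Periodic v₂ (2 * π)) :
    HasDerivAt (fun t : ℝ => (1 / 2) * ∫ s in (0:ℝ)..(2 * π),
        ((γ₁ s + t * v₁ s) * (deriv γ₂ s + t * deriv v₂ s) -
          (γ₂ s + t * v₂ s) * (deriv γ₁ s + t * deriv v₁ s)))
      (∫ s in (0:ℝ)..(2 * π), (v₁ s * deriv γ₂ s - v₂ s * deriv γ₁ s)) 0 := by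
  have hcγ₁ : Continuous γ₁ := hγ₁.continuous
  have hcγ₂ : Continuous γ₂ := hγ₂.continuous
  have hcv₁ : Continuous v₁ := hv₁.continuous
  have hcv₂ : Continuous v₂ := hv₂.continuous
  have hcdγ₁ : Continuous (deriv γ₁) := hγ₁.continuous_deriv le_rfl
  have hcdγ₂ : Continuous (deriv γ₂) := hγ₂.continuous_deriv le_rfl
  have hcdv₁ : Continuous (deriv v₁) := hv₁.continuous_deriv le_rfl
  have hcdv₂ : Continuous (deriv v₂) := hv₂.continuous_deriv le_rfl
  set c0 : ℝ → ℝ := fun s => γ₁ s * deriv γ₂ s - γ₂ s * deriv γ₁ s with hc0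
  set c1 : ℝ → ℝ := fun s =>
    γ₁ s * deriv v₂ s + v₁ s * deriv γ₂ s - (γ₂ s * deriv v₁ s + v₂ s * deriv γ₁ s) with hc1
  set c2 : ℝ → ℝ := fun s => v₁ s * deriv v₂ s - v₂ s * deriv v₁ s with hc2
  have hcc0 : Continuous c0 := ((hcγ₁.mul hcdγ₂).sub (hcγ₂.mul hcdγ₁))
  have hcc1 : Continuous c1 :=
    (((hcγ₁.mul hcdv₂).add (hcv₁.mul hcdγ₂)).sub ((hcγ₂.mul hcdv₁).add (hcv₂.mul hcdγ₁)))
  have hcc2 : Continuous c2 := ((hcv₁.mul hcdv₂).sub (hcv₂.mul hcdv₁))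
  set I0 : ℝ := ∫ s in (0:ℝ)..(2 * π), c0 s with hI0
  set I1 : ℝ := ∫ s in (0:ℝ)..(2 * π), c1 s with hI1
  set I2 : ℝ := ∫ s in (0:ℝ)..(2 * π), c2 s with hI2
  have key : ∀ t : ℝ, (∫ s in (0:ℝ)..(2 * π),
      ((γ₁ s + t * v₁ s) * (deriv γ₂ s + t * deriv v₂ s) -
        (γ₂ s + t * v₂ s) * (deriv γ₁ s + t * deriv v₁ s)))
      = I0 + t * I1 + t ^ 2 * I2 := by
    intro t
    have h1 : (∫ s in (0:ℝ)..(2 * π),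
        ((γ₁ s + t * v₁ s) * (deriv γ₂ s + t * deriv v₂ s) -
          (γ₂ s + t * v₂ s) * (deriv γ₁ s + t * deriv v₁ s)))
        = ∫ s in (0:ℝ)..(2 * π), (c0 s + t * c1 s + t ^ 2 * c2 s) := by
      apply intervalIntegral.integral_congr
      intro s _
      simp only [hc0, hc1, hc2]
      ring
    rw [h1, intervalIntegral.integral_add, intervalIntegral.integral_add,
        intervalIntegral.integral_const_mul, intervalIntegral.integral_const_mul]
    · exact hcc0.intervalIntegrable _ _
    · exact (continuous_const.mul hcc1).intervalIntegrable _ _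
    · exact ((hcc0.intervalIntegrable _ _).add ((continuous_const.mul hcc1).intervalIntegrable _ _))
    · exact (continuous_const.mul hcc2).intervalIntegrable _ _
  have hpoly : HasDerivAt (fun t : ℝ => (1 / 2) * (I0 + t * I1 + t ^ 2 * I2))
      ((1 / 2) * I1) 0 := by
    have h : HasDerivAt (fun t : ℝ => I0 + t * I1 + t ^ 2 * I2)
        (0 + 1 * I1 + (2 * 0 ^ 1 * 1) * I2) 0 := by
      exact (((hasDerivAt_const (0:ℝ) I0).add ((hasDerivAt_id (0:ℝ)).mul_const I1)).add
        (((hasDerivAt_id (0:ℝ)).pow 2).mul_const I2))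
    have h' := h.const_mul (1 / 2 : ℝ)
    simpa using h'
  -- integration by parts
  have hdγ₁ : ∀ x ∈ Set.uIcc (0:ℝ) (2 * π), HasDerivAt γ₁ (deriv γ₁ x) x := fun x _ =>
    (hγ₁.differentiable one_ne_zero).differentiableAt.hasDerivAt
  have hdγ₂ : ∀ x ∈ Set.uIcc (0:ℝ) (2 * π), HasDerivAt γ₂ (deriv γ₂ x) x := fun x _ =>
    (hγ₂.differentiable one_ne_zero).differentiableAt.hasDerivAt
  have hdv₁ : ∀ x ∈ Set.uIcc (0:ℝ) (2 * π), HasDerivAt v₁ (deriv v₁ x) x := fun x _ =>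
    (hv₁.differentiable one_ne_zero).differentiableAt.hasDerivAt
  have hdv₂ : ∀ x ∈ Set.uIcc (0:ℝ) (2 * π), HasDerivAt v₂ (deriv v₂ x) x := fun x _ =>
    (hv₂.differentiable one_ne_zero).differentiableAt.hasDerivAt
  have hγ₁e : γ₁ (2 * π) = γ₁ 0 := by simpa using hγ₁p 0
  have hγ₂e : γ₂ (2 * π) = γ₂ 0 := by simpa using hγ₂p 0
  have hv₁e : v₁ (2 * π) = v₁ 0 := by simpa using hv₁p 0
  have hv₂e : v₂ (2 * π) = v₂ 0 := by simpa using hv₂p 0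
  have ibp1 : (∫ s in (0:ℝ)..(2 * π), γ₁ s * deriv v₂ s)
      = - ∫ s in (0:ℝ)..(2 * π), deriv γ₁ s * v₂ s := by
    have := intervalIntegral.integral_mul_deriv_eq_deriv_mul hdγ₁ hdv₂
      (hcdγ₁.intervalIntegrable _ _) (hcdv₂.intervalIntegrable _ _)
    rw [this, hγ₁e, hv₂e]; ring
  have ibp2 : (∫ s in (0:ℝ)..(2 * π), γ₂ s * deriv v₁ s)
      = - ∫ s in (0:ℝ)..(2 * π), deriv γ₂ s * v₁ s := by
    have := intervalIntegral.integral_mul_deriv_eq_deriv_mul hdγ₂ hdv₁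
      (hcdγ₂.intervalIntegrable _ _) (hcdv₁.intervalIntegrable _ _)
    rw [this, hγ₂e, hv₁e]; ring
  have hI1eq : (1 / 2) * I1 = ∫ s in (0:ℝ)..(2 * π), (v₁ s * deriv γ₂ s - v₂ s * deriv γ₁ s) := by
    have hsplit : I1 = (∫ s in (0:ℝ)..(2 * π), γ₁ s * deriv v₂ s)
        + (∫ s in (0:ℝ)..(2 * π), v₁ s * deriv γ₂ s)
        - ((∫ s in (0:ℝ)..(2 * π), γ₂ s * deriv v₁ s)
        + (∫ s in (0:ℝ)..(2 * π), v₂ s * deriv γ₁ s)) := by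
      rw [hI1, ← intervalIntegral.integral_add (f := fun s => γ₁ s * deriv v₂ s)
        (g := fun s => v₁ s * deriv γ₂ s) ((hcγ₁.mul hcdv₂).intervalIntegrable _ _)
        ((hcv₁.mul hcdγ₂).intervalIntegrable _ _),
        ← intervalIntegral.integral_add (f := fun s => γ₂ s * deriv v₁ s)
        (g := fun s => v₂ s * deriv γ₁ s) ((hcγ₂.mul hcdv₁).intervalIntegrable _ _)
        ((hcv₂.mul hcdγ₁).intervalIntegrable _ _),
        ← intervalIntegral.integral_sub]
      · exact ((hcγ₁.mul hcdv₂).add (hcv₁.mul hcdγ₂)).intervalIntegrable _ _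
      · exact ((hcγ₂.mul hcdv₁).add (hcv₂.mul hcdγ₁)).intervalIntegrable _ _
    rw [hsplit, ibp1, ibp2]
    have e1 : (∫ s in (0:ℝ)..(2 * π), deriv γ₁ s * v₂ s)
        = ∫ s in (0:ℝ)..(2 * π), v₂ s * deriv γ₁ s := by
      apply intervalIntegral.integral_congr; intro s _; ring
    have e2 : (∫ s in (0:ℝ)..(2 * π), deriv γ₂ s * v₁ s)
        = ∫ s in (0:ℝ)..(2 * π), v₁ s * deriv γ₂ s := by
      apply intervalIntegral.integral_congr; intro s _; ring
    rw [e1, e2]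
    have e3 : (∫ s in (0:ℝ)..(2 * π), (v₁ s * deriv γ₂ s - v₂ s * deriv γ₁ s))
        = (∫ s in (0:ℝ)..(2 * π), v₁ s * deriv γ₂ s)
          - ∫ s in (0:ℝ)..(2 * π), v₂ s * deriv γ₁ s :=
      intervalIntegral.integral_sub ((hcv₁.mul hcdγ₂).intervalIntegrable _ _)
        ((hcv₂.mul hcdγ₁).intervalIntegrable _ _)
    rw [e3]; ring
  rw [← hI1eq]
  have hfun : (fun t : ℝ => (1 / 2) * ∫ s in (0:ℝ)..(2 * π),
      ((γ₁ s + t * v₁ s) * (deriv γ₂ s + t * deriv v₂ s) -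
        (γ₂ s + t * v₂ s) * (deriv γ₁ s + t * deriv v₁ s)))
      = fun t : ℝ => (1 / 2) * (I0 + t * I1 + t ^ 2 * I2) := by
    funext t; rw [key t]
  rw [hfun]
  exact hpoly
end
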